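/- Mean-value representation for the GLM score map: let μ: ℝ → ℝ be continuously differentiable with k₁ ≤ μ'(x) ≤ k₂ for all x ∈ ℝ, where 0 < k₁ ≤ 1 and k₂ ≥ 1. Let λ > 0, let a_1, …, a_t ∈ ℝ^d, and define g_t(θ) = λθ + Σ_{s=1}^t μ(⟨θ, a_s⟩) a_s and V_t = λI_d + Σ_{s=1}^t a_s a_s'. Then for any θ₁, θ₂ ∈ ℝ^d there exists a symmetric positive definite d×d matrix G such that k₁V_t ⪯ G ⪯ k₂V_t and g_t(θ₁) − g_t(θ₂) = G(θ₁ − θ₂). -/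

import Mathlib

open scoped Matrix


/-- The dot product of two vectors in `ℝ^d`. -/
def dotp {d : ℕ} (x y : Fin d → ℝ) : ℝ := ∑ i, x i * y i

/-- The outer product `a a'` of a column vector with itself. -/
def outer {d : ℕ} (x : Fin d → ℝ) : Matrix (Fin d) (Fin d) ℝ := fun i j => x i * x j


lemma slope_lem (μ μ' : ℝ → ℝ) (hderiv : ∀ x, HasDerivAt μ (μ' x) x)
    (k₁ k₂ : ℝ) (hk : k₁ ≤ 1) (hk2 : 1 ≤ k₂)
    (hb : ∀ x, k₁ ≤ μ' x ∧ μ' x ≤ k₂) (x y : ℝ) :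
    ∃ c, k₁ ≤ c ∧ c ≤ k₂ ∧ μ y - μ x = c * (y - x) := by
  have key : ∀ u v : ℝ, u < v → ∃ c, k₁ ≤ c ∧ c ≤ k₂ ∧ μ v - μ u = c * (v - u) := by
    intro u v huv
    obtain ⟨ξ, hξ, hξ'⟩ := exists_hasDerivAt_eq_slope μ μ' huv
      (fun z _ => (hderiv z).continuousAt.continuousWithinAt)
      (fun z _ => hderiv z)
    exact ⟨μ' ξ, (hb ξ).1, (hb ξ).2, by
      rw [hξ', div_mul_cancel₀ _ (by linarith : v - u ≠ 0)]⟩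
  rcases lt_trichotomy x y with h | h | h
  · exact key x y h
  · exact ⟨1, hk, hk2, by simp [h]⟩
  · obtain ⟨c, h1, h2, h3⟩ := key y x h
    exact ⟨c, h1, h2, by linarith⟩

lemma outer_mulVec {d : ℕ} (x v : Fin d → ℝ) :
    (outer x).mulVec v = (x ⬝ᵥ v) • x := by
  funext i
  simp [outer, Matrix.mulVec, dotProduct, Finset.mul_sum, mul_comm, mul_assoc,
    mul_left_comm]

lemma sum_mulVec' {d : ℕ} {α : Type*} (S : Finset α) (M : α → Matrix (Fin d) (Fin d) ℝ)
    (v : Fin d → ℝ) : (∑ s ∈ S, M s).mulVec v = ∑ s ∈ S, (M s).mulVec v := by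
  funext i
  simp [Matrix.mulVec, dotProduct, Matrix.sum_apply, Finset.sum_mul]
  rw [Finset.sum_comm]

lemma dotp_sum' {d : ℕ} {α : Type*} (S : Finset α) (v : Fin d → ℝ) (f : α → Fin d → ℝ) :
    v ⬝ᵥ ∑ s ∈ S, f s = ∑ s ∈ S, v ⬝ᵥ f s := by
  simp [dotProduct, Finset.mul_sum, Finset.sum_apply]
  exact Finset.sum_comm

lemma symm_herm {d : ℕ} {A : Matrix (Fin d) (Fin d) ℝ} (h : A.IsSymm) : A.IsHermitian := by
  show Aᴴ = A
  ext i j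
  simpa using h.apply i j

/-- **Mean-value representation for the GLM score map.** If `μ` is continuously
differentiable with `k₁ ≤ μ' ≤ k₂` everywhere (`0 < k₁ ≤ 1 ≤ k₂`), then for
`g_t(θ) = λθ + ∑_{s=1}^t μ(⟨θ, a_s⟩) a_s` and `V_t = λI + ∑_{s=1}^t a_s a_s'`, and any
`θ₁, θ₂`, there is a symmetric positive definite matrix `G` with `k₁ V_t ⪯ G ⪯ k₂ V_t`
and `g_t(θ₁) − g_t(θ₂) = G (θ₁ − θ₂)`. -/
theorem stmt_10
    (d t : ℕ)
    (μ μ' : ℝ → ℝ)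
    (hderiv : ∀ x, HasDerivAt μ (μ' x) x) (hcont : Continuous μ')
    (k₁ k₂ : ℝ) (hk₁0 : 0 < k₁) (hk₁1 : k₁ ≤ 1) (hk₂ : 1 ≤ k₂)
    (hbounds : ∀ x, k₁ ≤ μ' x ∧ μ' x ≤ k₂)
    (lam : ℝ) (hlam : 0 < lam)
    (a : ℕ → (Fin d → ℝ))
    (g : (Fin d → ℝ) → (Fin d → ℝ))
    (hg : ∀ θ, g θ = lam • θ + ∑ s ∈ Finset.Icc 1 t, μ (dotp θ (a s)) • a s)
    (V : Matrix (Fin d) (Fin d) ℝ)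
    (hV : V = lam • (1 : Matrix (Fin d) (Fin d) ℝ) + ∑ s ∈ Finset.Icc 1 t, outer (a s))
    (θ₁ θ₂ : Fin d → ℝ) :
    ∃ G : Matrix (Fin d) (Fin d) ℝ, G.IsSymm ∧ G.PosDef ∧
      (G - k₁ • V).PosSemidef ∧ (k₂ • V - G).PosSemidef ∧
      g θ₁ - g θ₂ = G.mulVec (θ₁ - θ₂) := by
  choose c hc1 hc2 hc3 using fun s =>
    slope_lem μ μ' hderiv k₁ k₂ hk₁1 hk₂ hbounds (dotp θ₂ (a s)) (dotp θ₁ (a s))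
  set G : Matrix (Fin d) (Fin d) ℝ :=
    lam • (1 : Matrix (Fin d) (Fin d) ℝ) + ∑ s ∈ Finset.Icc 1 t, c s • outer (a s) with hG
  -- quadratic form of matrices of this shape
  have quad : ∀ (l : ℝ) (w : ℕ → ℝ) (v : Fin d → ℝ),
      v ⬝ᵥ ((l • (1 : Matrix (Fin d) (Fin d) ℝ) +
        ∑ s ∈ Finset.Icc 1 t, w s • outer (a s)).mulVec v)
      = l * (v ⬝ᵥ v) + ∑ s ∈ Finset.Icc 1 t, w s * (a s ⬝ᵥ v) ^ 2 := by
    intro l w v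
    rw [Matrix.add_mulVec, dotProduct_add, sum_mulVec', dotp_sum']
    congr 1
    · rw [Matrix.smul_mulVec, Matrix.one_mulVec, dotProduct_smul]
      rfl
    · refine Finset.sum_congr rfl fun s _ => ?_
      rw [Matrix.smul_mulVec, outer_mulVec, dotProduct_smul,
        dotProduct_smul, dotProduct_comm v (a s), smul_eq_mul, smul_eq_mul]
      ring
  have hvv : ∀ v : Fin d → ℝ, 0 ≤ v ⬝ᵥ v := fun v =>
    Finset.sum_nonneg fun i _ => mul_self_nonneg _
  have hVsymm : V.IsSymm := by
    rw [hV]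
    refine Matrix.IsSymm.ext fun i j => ?_
    simp [Matrix.sum_apply, outer, Matrix.one_apply, mul_comm, eq_comm]
  have hsym : G.IsSymm := by
    rw [hG]
    refine Matrix.IsSymm.ext fun i j => ?_
    simp [Matrix.sum_apply, outer, Matrix.one_apply, mul_comm, mul_left_comm, eq_comm]
  have hVquad : ∀ v : Fin d → ℝ,
      v ⬝ᵥ V.mulVec v = lam * (v ⬝ᵥ v) + ∑ s ∈ Finset.Icc 1 t, (a s ⬝ᵥ v) ^ 2 := by
    intro v
    rw [hV]
    have := quad lam (fun _ => 1) v
    simpa using this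
  have hq : ∀ (s : ℕ) (v : Fin d → ℝ), (0:ℝ) ≤ (a s ⬝ᵥ v) ^ 2 := fun s v => sq_nonneg _
  refine ⟨G, hsym, ?_, ?_, ?_, ?_⟩
  · -- PosDef
    refine Matrix.PosDef.of_dotProduct_mulVec_pos (symm_herm hsym) fun v hv => ?_
    show (0:ℝ) < star v ⬝ᵥ G.mulVec v
    have hst : star v = v := rfl
    rw [hst, hG, quad]
    have h1 : 0 < lam * (v ⬝ᵥ v) := by
      refine mul_pos hlam ?_
      rcases (hvv v).lt_or_eq with h | h
      · exact h
      · exact absurd (dotProduct_self_eq_zero.mp h.symm) hv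
    have h2 : 0 ≤ ∑ s ∈ Finset.Icc 1 t, c s * (a s ⬝ᵥ v) ^ 2 :=
      Finset.sum_nonneg fun s _ => mul_nonneg (by linarith [hc1 s]) (sq_nonneg _)
    linarith
  · -- G - k₁ V psd
    refine Matrix.PosSemidef.of_dotProduct_mulVec_nonneg (symm_herm (hsym.sub (hVsymm.smul k₁))) fun v => ?_
    show (0:ℝ) ≤ star v ⬝ᵥ (G - k₁ • V).mulVec v
    have hst : star v = v := rfl
    rw [hst, Matrix.sub_mulVec, dotProduct_sub, Matrix.smul_mulVec,
      dotProduct_smul, hG, quad, hVquad]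
    have h1 : k₁ * (lam * (v ⬝ᵥ v)) ≤ lam * (v ⬝ᵥ v) := by
      nlinarith [mul_nonneg (by linarith : (0:ℝ) ≤ 1 - k₁) (mul_nonneg hlam.le (hvv v))]
    have h2 : ∑ s ∈ Finset.Icc 1 t, k₁ * (a s ⬝ᵥ v) ^ 2
        ≤ ∑ s ∈ Finset.Icc 1 t, c s * (a s ⬝ᵥ v) ^ 2 :=
      Finset.sum_le_sum fun s _ => mul_le_mul_of_nonneg_right (hc1 s) (sq_nonneg _)
    rw [smul_eq_mul, mul_add, Finset.mul_sum]
    linarith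
  · -- k₂ V - G psd
    refine Matrix.PosSemidef.of_dotProduct_mulVec_nonneg (symm_herm ((hVsymm.smul k₂).sub hsym)) fun v => ?_
    show (0:ℝ) ≤ star v ⬝ᵥ (k₂ • V - G).mulVec v
    have hst : star v = v := rfl
    rw [hst, Matrix.sub_mulVec, dotProduct_sub, Matrix.smul_mulVec,
      dotProduct_smul, hG, quad, hVquad]
    have h1 : lam * (v ⬝ᵥ v) ≤ k₂ * (lam * (v ⬝ᵥ v)) := by
      nlinarith [mul_nonneg (by linarith : (0:ℝ) ≤ k₂ - 1) (mul_nonneg hlam.le (hvv v))]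
    have h2 : ∑ s ∈ Finset.Icc 1 t, c s * (a s ⬝ᵥ v) ^ 2
        ≤ ∑ s ∈ Finset.Icc 1 t, k₂ * (a s ⬝ᵥ v) ^ 2 :=
      Finset.sum_le_sum fun s _ => mul_le_mul_of_nonneg_right (hc2 s) (sq_nonneg _)
    rw [smul_eq_mul, mul_add, Finset.mul_sum]
    linarith
  · -- the mean value identity
    rw [hg, hg, hG, Matrix.add_mulVec, sum_mulVec', Matrix.smul_mulVec,
      Matrix.one_mulVec]
    have : ∀ s ∈ Finset.Icc 1 t,
        (c s • outer (a s)).mulVec (θ₁ - θ₂)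
          = μ (dotp θ₁ (a s)) • a s - μ (dotp θ₂ (a s)) • a s := by
      intro s _
      rw [Matrix.smul_mulVec, outer_mulVec, ← sub_smul, hc3 s, smul_smul]
      congr 1
      have : dotp θ₁ (a s) - dotp θ₂ (a s) = a s ⬝ᵥ (θ₁ - θ₂) := by
        show θ₁ ⬝ᵥ a s - θ₂ ⬝ᵥ a s = _
        rw [← sub_dotProduct, dotProduct_comm]
      rw [this]
    rw [Finset.sum_congr rfl this, smul_sub, Finset.sum_sub_distrib]
    abel
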